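/- If the auction system is β-KL-expressive and c-homogeneous, then in the full-information setting, for every conservative pure Nash equilibrium b of the PBM-GSP mechanism (with any number of slots), SW(OPT(v)) ≤ ((β+1)/β)·c · SW(b); that is, the pure price of anarchy of PBM-GSP in the multi-slot case is at most (β+1)c/β. -/

import Mathlib

open Finset MeasureTheory

noncomputable section

namespace PBM

attribute [local instance] Classical.propDecidable

/-- 0-indexed rank of advertiser `i` among the advertisers with a positive bid
(higher bid first, ties broken by smaller index). -/
def rank {n : ℕ} (bs : Fin n → ℝ) (i : Fin n) : ℕ :=
  (Finset.univ.filter fun j => 0 < bs j ∧ (bs i < bs j ∨ (bs j = bs i ∧ j < i))).card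

/-- 0-indexed rank of `i` among all coordinates of `x` (decreasing, ties by index). -/
def rankAll {n : ℕ} (x : Fin n → ℝ) (i : Fin n) : ℕ :=
  (Finset.univ.filter fun j => x i < x j ∨ (x j = x i ∧ j < i)).card

/-- click probability of the slot obtained by `i` (0 if `i` places no positive bid). -/
def slotW {n : ℕ} (w : ℕ → ℝ) (bs : Fin n → ℝ) (i : Fin n) : ℝ :=
  if 0 < bs i then w (rank bs i) else 0

/-- GSP per-click payment of `i`: the bid of the advertiser ranked right below `i`
(0 if there is none). -/
def pay {n : ℕ} (bs : Fin n → ℝ) (i : Fin n) : ℝ :=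
  ∑ j ∈ Finset.univ.filter (fun j => 0 < bs j ∧ rank bs j = rank bs i + 1), bs j

/-- utility of bidder `i` in the single-keyword GSP game with values `vv`. -/
def gspUtil {n : ℕ} (w : ℕ → ℝ) (vv : Fin n → ℝ) (bs : Fin n → ℝ) (i : Fin n) : ℝ :=
  slotW w bs i * (vv i - pay bs i)

variable {Q S : Type*} [Fintype Q] [Fintype S]

/-- expected value of keyword `s` for an advertiser with per-query valuations `vq`. -/
def kwVal (P : Q → ℝ) (pi : Q → S → ℝ) (vq : Q → ℝ) (s : S) : ℝ :=
  (∑ q, pi q s * vq q * P q) / (∑ q, pi q s * P q)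

/-- probability mass of keyword `s`. -/
def mass (P : Q → ℝ) (pi : Q → S → ℝ) (s : S) : ℝ := ∑ q, pi q s * P q

/-- expected utility of advertiser `i` in PBM-GSP. -/
def util {n : ℕ} (P : Q → ℝ) (pi : Q → S → ℝ) (w : ℕ → ℝ)
    (v : Fin n → Q → ℝ) (b : Fin n → S → ℝ) (i : Fin n) : ℝ :=
  ∑ q, P q * ∑ s, pi q s *
    (slotW w (fun j => b j s) i * (v i q - pay (fun j => b j s) i))

/-- social welfare of bid profile `b` in PBM-GSP. -/
def SW {n : ℕ} (P : Q → ℝ) (pi : Q → S → ℝ) (w : ℕ → ℝ)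
    (v : Fin n → Q → ℝ) (b : Fin n → S → ℝ) : ℝ :=
  ∑ q, P q * ∑ s, pi q s * ∑ i, slotW w (fun j => b j s) i * v i q

/-- optimal social welfare. -/
def SWopt {n : ℕ} (P : Q → ℝ) (w : ℕ → ℝ) (v : Fin n → Q → ℝ) : ℝ :=
  ∑ q, P q * ∑ i, w (rankAll (fun j => v j q) i) * v i q

/-- welfare of the truthful keyword-bid profile `𝔳` (each advertiser bids his
expected keyword value on every keyword, no `κ` constraint). -/
def SWtruth {n : ℕ} (P : Q → ℝ) (pi : Q → S → ℝ) (w : ℕ → ℝ)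
    (v : Fin n → Q → ℝ) : ℝ :=
  ∑ q, P q * ∑ s, pi q s *
    ∑ i, w (rankAll (fun j => kwVal P pi (v j) s) i) * kwVal P pi (v i) s

/-- a bid vector is valid if it is nonnegative and positive on at most `κ` keywords. -/
def ValidBid (κ : ℕ) (bi : S → ℝ) : Prop :=
  (∀ s, 0 ≤ bi s) ∧ ((Finset.univ.filter fun s => 0 < bi s).card ≤ κ)

/-- a bid profile is conservative if everybody bids at most his expected keyword value. -/
def Conservative {n : ℕ} (P : Q → ℝ) (pi : Q → S → ℝ)
    (v : Fin n → Q → ℝ) (b : Fin n → S → ℝ) : Prop :=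
  ∀ i s, b i s ≤ kwVal P pi (v i) s

/-- `β`-keyword-level expressiveness for valuation profile `v`. -/
def KLExpressive {n : ℕ} (pi : Q → S → ℝ) (v : Fin n → Q → ℝ) (κ : ℕ) (β : ℝ) : Prop :=
  ∀ i : Fin n,
    β * ((Finset.univ.filter fun s : S => ∃ q, 0 < pi q s ∧ 0 < v i q).card : ℝ) ≤ (κ : ℝ)

/-- expected utility of advertiser `i` in PBM-GSP with reserve price vector `r`. -/
def utilR {n : ℕ} (P : Q → ℝ) (pi : Q → S → ℝ) (w : ℕ → ℝ) (r : S → ℝ)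
    (v : Fin n → Q → ℝ) (b : Fin n → S → ℝ) (i : Fin n) : ℝ :=
  ∑ q, P q * ∑ s, pi q s *
    (if 0 < b i s ∧ r s ≤ b i s then
       w (rank (fun j => b j s) i) * (v i q - max (r s) (pay (fun j => b j s) i))
     else 0)

/-- revenue of PBM-GSP with reserve price vector `r`. -/
def revenue {n : ℕ} (P : Q → ℝ) (pi : Q → S → ℝ) (w : ℕ → ℝ) (r : S → ℝ)
    (b : Fin n → S → ℝ) : ℝ :=
  ∑ q, P q * ∑ s, pi q s * ∑ i,
    (if 0 < b i s ∧ r s ≤ b i s then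
       w (rank (fun j => b j s) i) * max (r s) (pay (fun j => b j s) i)
     else 0)

/-- reserve-restricted social welfare of PBM-GSP with reserve price vector `r`. -/
def SWres {n : ℕ} (P : Q → ℝ) (pi : Q → S → ℝ) (w : ℕ → ℝ) (r : S → ℝ)
    (v : Fin n → Q → ℝ) (b : Fin n → S → ℝ) : ℝ :=
  ∑ q, P q * ∑ s, pi q s * ∑ i,
    (if 0 < b i s ∧ r s ≤ b i s then w (rank (fun j => b j s) i) * v i q else 0)

/-- marginal CDF on keyword `s` of a distribution `T` of keyword-valuation vectors. -/
def cdfT (T : Measure (S → ℝ)) (s : S) (x : ℝ) : ℝ :=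
  ((T.map fun f => f s) (Set.Iic x)).toReal

/-- the virtual value function `φ_s(x) = x - (1 - T_s(x))/t_s(x)`. -/
def virt (T : Measure (S → ℝ)) (td : S → ℝ → ℝ) (s : S) (x : ℝ) : ℝ :=
  x - (1 - cdfT T s x) / td s x

/-- `td s` is the density of the marginal of `T` on keyword `s`. -/
def HasDensity (T : Measure (S → ℝ)) (td : S → ℝ → ℝ) : Prop :=
  ∀ s : S, T.map (fun f => f s)
    = MeasureTheory.volume.withDensity (fun x => ENNReal.ofReal (td s x))

/-- `r` is the vector of Myerson reserve prices. -/
def MyersonReserve (T : Measure (S → ℝ)) (td : S → ℝ → ℝ) (r : S → ℝ) : Prop :=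
  ∀ s : S, 0 ≤ r s ∧ virt T td s (r s) = 0

/-- `T` is an MHR distribution with bounded derivative `η`. -/
def MHRBounded (T : Measure (S → ℝ)) (td : S → ℝ → ℝ) (r : S → ℝ) (η : ℝ) : Prop :=
  ∀ s : S, (∀ x : ℝ, 0 ≤ x → DifferentiableAt ℝ (virt T td s) x) ∧
    (∀ x : ℝ, 0 ≤ x → 1 ≤ deriv (virt T td s) x) ∧
    (∀ x : ℝ, r s ≤ x → deriv (virt T td s) x ≤ η)

/-- `T` has a monotone hazard rate. -/
def MHRhazard (T : Measure (S → ℝ)) (td : S → ℝ → ℝ) : Prop :=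
  ∀ s : S, MonotoneOn (fun x => td s x / (1 - cdfT T s x))
    {x : ℝ | 0 ≤ x ∧ cdfT T s x < 1}

/-- expected revenue (per valuation profile) of PBM-VCG with reserve prices, via
Myerson's lemma: virtual-value surplus of the welfare-maximizing allocation. -/
def revVCG {n : ℕ} (P : Q → ℝ) (pi : Q → S → ℝ) (w : ℕ → ℝ)
    (T : Measure (S → ℝ)) (td : S → ℝ → ℝ) (v : Fin n → Q → ℝ) : ℝ :=
  ∑ s, mass P pi s * ∑ i, w (rankAll (fun j => kwVal P pi (v j) s) i) *
    (if 0 < virt T td s (kwVal P pi (v i) s) then virt T td s (kwVal P pi (v i) s) else 0)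

end PBM

namespace PBMAux
open PBM Finset

attribute [local instance] Classical.propDecidable

variable {n : ℕ}

/-- `j` has higher priority than `i` w.r.t. the score vector `x`. -/
def beats (x : Fin n → ℝ) (j i : Fin n) : Prop :=
  x i < x j ∨ (x j = x i ∧ j < i)

lemma beats_irrefl (x : Fin n → ℝ) (i : Fin n) : ¬ beats x i i := by
  simp [beats]

lemma beats_trans {x : Fin n → ℝ} {i j k : Fin n} (h1 : beats x k j) (h2 : beats x j i) :
    beats x k i := by
  rcases h1 with h1 | ⟨h1, h1'⟩ <;> rcases h2 with h2 | ⟨h2, h2'⟩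
  · exact Or.inl (h2.trans h1)
  · exact Or.inl (h2 ▸ h1)
  · exact Or.inl (h1 ▸ h2)
  · exact Or.inr ⟨h1.trans h2, h1'.trans h2'⟩

lemma beats_total {x : Fin n → ℝ} {i j : Fin n} (h : i ≠ j) : beats x i j ∨ beats x j i := by
  rcases lt_trichotomy (x i) (x j) with hx | hx | hx
  · exact Or.inr (Or.inl hx)
  · rcases lt_or_gt_of_ne h with hij | hij
    · exact Or.inl (Or.inr ⟨hx, hij⟩)
    · exact Or.inr (Or.inr ⟨hx.symm, hij⟩)
  · exact Or.inl (Or.inl hx)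

lemma bs_le_of_beats {x : Fin n → ℝ} {i j : Fin n} (h : beats x i j) : x j ≤ x i := by
  rcases h with h | ⟨h, _⟩
  · exact h.le
  · exact h.ge

/-- rank within a pool `P`. -/
def br (x : Fin n → ℝ) (P : Finset (Fin n)) (i : Fin n) : ℕ :=
  (P.filter fun j => beats x j i).card

lemma br_lt_br {x : Fin n → ℝ} {P : Finset (Fin n)} {i j : Fin n}
    (hj : j ∈ P) (h : beats x j i) : br x P j < br x P i := by
  apply Finset.card_lt_card
  constructor
  · intro l hl
    simp only [mem_filter] at hl ⊢
    exact ⟨hl.1, beats_trans hl.2 h⟩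
  · intro hsub
    have hjmem : j ∈ P.filter fun l => beats x l i := by
      simp only [mem_filter]; exact ⟨hj, h⟩
    have := hsub hjmem
    simp only [mem_filter] at this
    exact beats_irrefl x j this.2

lemma br_injOn {x : Fin n → ℝ} {P : Finset (Fin n)} {i j : Fin n}
    (hi : i ∈ P) (hj : j ∈ P) (h : br x P i = br x P j) : i = j := by
  by_contra hne
  rcases beats_total (x := x) hne with hb | hb
  · exact absurd h (Nat.ne_of_lt (br_lt_br hi hb))
  · exact absurd h.symm (Nat.ne_of_lt (br_lt_br hj hb))

lemma br_lt_card {x : Fin n → ℝ} {P : Finset (Fin n)} {i : Fin n} (hi : i ∈ P) :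
    br x P i < P.card := by
  apply Finset.card_lt_card
  constructor
  · exact filter_subset _ _
  · intro hsub
    have := hsub hi
    simp only [mem_filter] at this
    exact beats_irrefl x i this.2

lemma br_surj {x : Fin n → ℝ} {P : Finset (Fin n)} {k : ℕ} (hk : k < P.card) :
    ∃ j ∈ P, br x P j = k := by
  have himg : P.image (br x P) = Finset.range P.card := by
    apply Finset.eq_of_subset_of_card_le
    · intro m hm
      simp only [mem_image] at hm
      obtain ⟨j, hj, rfl⟩ := hm
      exact mem_range.2 (br_lt_card hj)
    · rw [Finset.card_range, Finset.card_image_of_injOn]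
      intro a ha b hb hab
      exact br_injOn ha hb hab
  have : k ∈ P.image (br x P) := himg ▸ mem_range.2 hk
  simpa only [mem_image] using this

lemma rank_eq_br (bs : Fin n → ℝ) (i : Fin n) :
    rank bs i = br bs (univ.filter fun j => 0 < bs j) i := by
  unfold rank br beats
  rw [Finset.filter_filter]
  congr!

lemma rankAll_eq_br (x : Fin n → ℝ) (i : Fin n) :
    rankAll x i = br x univ i := by
  unfold rankAll br beats
  congr!

lemma rankAll_lt (x : Fin n → ℝ) (i : Fin n) : rankAll x i < n := by
  rw [rankAll_eq_br]
  simpa using br_lt_card (x := x) (P := (univ : Finset (Fin n))) (mem_univ i)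

lemma rankAll_injective (x : Fin n → ℝ) : Function.Injective (rankAll x) := by
  intro i j h
  rw [rankAll_eq_br, rankAll_eq_br] at h
  exact br_injOn (mem_univ i) (mem_univ j) h

end PBMAux
namespace PBMAux
open PBM Finset

variable {n : ℕ}

/-- bid of the advertiser at rank `k` (0 if none). -/
def bidAt (bs : Fin n → ℝ) (k : ℕ) : ℝ :=
  ∑ j ∈ Finset.univ.filter (fun j => 0 < bs j ∧ rank bs j = k), bs j

lemma pay_eq_bidAt (bs : Fin n → ℝ) (i : Fin n) : pay bs i = bidAt bs (rank bs i + 1) := rfl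

lemma bidAt_nonneg {bs : Fin n → ℝ} (h : ∀ j, 0 ≤ bs j) (k : ℕ) : 0 ≤ bidAt bs k :=
  Finset.sum_nonneg fun j _ => h j

/-- at most `k` positive bids strictly exceed the rank-`k` bid. -/
lemma card_gt_bidAt_le {bs : Fin n → ℝ} (k : ℕ) :
    (univ.filter fun j => 0 < bs j ∧ bidAt bs k < bs j).card ≤ k := by
  classical
  set P := univ.filter fun j => 0 < bs j with hP
  have hmemP : ∀ j, j ∈ P ↔ 0 < bs j := by intro j; simp [hP]
  by_cases hocc : ∃ j₀ ∈ P, br bs P j₀ = k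
  · obtain ⟨j₀, hj₀P, hj₀k⟩ := hocc
    have hrank : ∀ j, rank bs j = br bs P j := fun j => rank_eq_br bs j
    have hbid : bidAt bs k = bs j₀ := by
      have hfilter : (univ.filter fun j => 0 < bs j ∧ rank bs j = k) = {j₀} := by
        apply Finset.eq_singleton_iff_unique_mem.2
        refine ⟨?_, ?_⟩
        · simp only [mem_filter, mem_univ, true_and]
          exact ⟨(hmemP j₀).1 hj₀P, by rw [hrank]; exact hj₀k⟩
        · intro j hj
          simp only [mem_filter, mem_univ, true_and] at hj
          exact br_injOn ((hmemP j).2 hj.1) hj₀P (by rw [← hrank, hj.2, hj₀k])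
      rw [bidAt, hfilter, Finset.sum_singleton]
    rw [hbid]
    -- any positive bid exceeding bs j₀ has rank < k
    have hsub : (univ.filter fun j => 0 < bs j ∧ bs j₀ < bs j)
        ⊆ P.filter fun j => br bs P j < k := by
      intro j hj
      simp only [mem_filter, mem_univ, true_and] at hj
      have hjP : j ∈ P := (hmemP j).2 hj.1
      refine mem_filter.2 ⟨hjP, ?_⟩
      rw [← hj₀k]
      exact br_lt_br hjP (Or.inl hj.2)
    refine le_trans (Finset.card_le_card hsub) ?_
    have : (P.filter fun j => br bs P j < k).card ≤ (Finset.range k).card := by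
      apply Finset.card_le_card_of_injOn (br bs P)
      · intro j hj
        simp only [Finset.mem_coe, mem_filter] at hj
        exact mem_range.2 hj.2
      · intro a ha b hb hab
        simp only [Finset.mem_coe, mem_filter] at ha hb
        exact br_injOn ha.1 hb.1 hab
    rw [Finset.card_range] at this
    exact this
  · push_neg at hocc
    have hcard : P.card ≤ k := by
      by_contra hlt
      push_neg at hlt
      obtain ⟨j, hj, hjk⟩ := br_surj (x := bs) (P := P) hlt
      exact hocc j hj hjk
    have hbid : bidAt bs k = 0 := by
      rw [bidAt]
      apply Finset.sum_eq_zero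
      intro j hj
      simp only [mem_filter, mem_univ, true_and] at hj
      exact absurd hj.2 (by rw [rank_eq_br]; exact hocc j ((hmemP j).2 hj.1))
    rw [hbid]
    refine le_trans (Finset.card_le_card ?_) hcard
    intro j hj
    simp only [mem_filter, mem_univ, true_and] at hj
    exact (hmemP j).2 hj.1

/-- the GSP payment never exceeds one's own bid. -/
lemma pay_le_self {bs : Fin n → ℝ} (h0 : ∀ j, 0 ≤ bs j) {i : Fin n} (hi : 0 < bs i) :
    pay bs i ≤ bs i := by
  classical
  set P := univ.filter fun j => 0 < bs j with hP
  have hiP : i ∈ P := by simp [hP, hi]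
  have hrank : ∀ j, rank bs j = br bs P j := fun j => rank_eq_br bs j
  have hcard : (univ.filter fun j => 0 < bs j ∧ rank bs j = rank bs i + 1).card ≤ 1 := by
    apply Finset.card_le_one.2
    intro a ha b hb
    simp only [mem_filter, mem_univ, true_and] at ha hb
    refine br_injOn (P := P) (x := bs) (by simp [hP, ha.1]) (by simp [hP, hb.1]) ?_
    rw [← hrank, ← hrank, ha.2, hb.2]
  have hle : ∀ j ∈ univ.filter fun j => 0 < bs j ∧ rank bs j = rank bs i + 1, bs j ≤ bs i := by
    intro j hj
    simp only [mem_filter, mem_univ, true_and] at hj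
    have hjP : j ∈ P := by simp [hP, hj.1]
    have hne : j ≠ i := by
      intro h; rw [h] at hj; omega
    rcases beats_total (x := bs) hne with hb | hb
    · have hlt := br_lt_br (x := bs) hjP hb
      rw [← hrank, ← hrank] at hlt
      omega
    · exact bs_le_of_beats hb
  calc pay bs i ≤ ∑ _j ∈ univ.filter fun j => 0 < bs j ∧ rank bs j = rank bs i + 1, bs i :=
        Finset.sum_le_sum hle
    _ ≤ bs i := by
        rw [Finset.sum_const, nsmul_eq_mul]
        have hc1 : ((univ.filter fun j => 0 < bs j ∧ rank bs j = rank bs i + 1).card : ℝ) ≤ 1 := by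
          exact_mod_cast hcard
        have hc0 : (0:ℝ) ≤ ((univ.filter fun j => 0 < bs j ∧ rank bs j = rank bs i + 1).card : ℝ) := by
          positivity
        nlinarith [hi.le]

lemma pay_nonneg {bs : Fin n → ℝ} (h : ∀ j, 0 ≤ bs j) (i : Fin n) : 0 ≤ pay bs i :=
  Finset.sum_nonneg fun j _ => h j

end PBMAux
namespace PBMAux
open PBM Finset

variable {n : ℕ}

/-- rearrangement: assigning slots by decreasing `y` is optimal. -/
lemma rearrange (w : ℕ → ℝ) (hw : Antitone w) (x y : Fin n → ℝ) (hy : ∀ i, 0 ≤ y i) :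
    ∑ i, w (rankAll x i) * y i ≤ ∑ i, w (rankAll y i) * y i := by
  classical
  have hmono : Monovary y (fun i => w (rankAll y i)) := by
    intro i j hlt
    have hr : rankAll y j < rankAll y i := by
      by_contra hcon
      push_neg at hcon
      exact absurd (hw hcon) (not_le.2 hlt)
    have hne : i ≠ j := by rintro rfl; omega
    rcases beats_total (x := y) hne with hb | hb
    · have := br_lt_br (x := y) (P := univ) (mem_univ i) hb
      rw [← rankAll_eq_br, ← rankAll_eq_br] at this
      omega
    · exact bs_le_of_beats hb
  let ex : Fin n ≃ Fin n := Equiv.ofBijective (fun i => (⟨rankAll x i, rankAll_lt x i⟩ : Fin n))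
    ((Finite.injective_iff_bijective).1 (fun i j h => rankAll_injective x (by
      simpa using congrArg Fin.val h)))
  let ey : Fin n ≃ Fin n := Equiv.ofBijective (fun i => (⟨rankAll y i, rankAll_lt y i⟩ : Fin n))
    ((Finite.injective_iff_bijective).1 (fun i j h => rankAll_injective y (by
      simpa using congrArg Fin.val h)))
  have key := hmono.sum_smul_comp_perm_le_sum_smul (σ := ex.trans ey.symm)
  have hcomp : ∀ i, rankAll y ((ex.trans ey.symm) i) = rankAll x i := by
    intro i
    have : ey (ey.symm (ex i)) = ex i := Equiv.apply_symm_apply _ _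
    have h2 : rankAll y (ey.symm (ex i)) = (ex i : Fin n).val := congrArg Fin.val this
    simpa [ex, Equiv.trans_apply] using h2
  calc ∑ i, w (rankAll x i) * y i = ∑ i, y i • w (rankAll y ((ex.trans ey.symm) i)) := by
        apply Finset.sum_congr rfl
        intro i _
        rw [hcomp i, smul_eq_mul, mul_comm]
    _ ≤ ∑ i, y i • w (rankAll y i) := key
    _ = ∑ i, w (rankAll y i) * y i := by
        apply Finset.sum_congr rfl
        intro i _
        rw [smul_eq_mul, mul_comm]

/-- summing the rank-indexed bids along any enumeration of ranks gives the
welfare-style sum. -/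
lemma sum_bidAt (w : ℕ → ℝ) (bs : Fin n → ℝ) (r : Fin n → ℕ)
    (hr : ∀ i, r i < n) (hinj : Function.Injective r) :
    ∑ i, w (r i) * bidAt bs (r i) = ∑ j, slotW w bs j * bs j := by
  classical
  let er : Fin n ≃ Fin n := Equiv.ofBijective (fun i => (⟨r i, hr i⟩ : Fin n))
    ((Finite.injective_iff_bijective).1 (fun i j h => hinj (by
      simpa using congrArg Fin.val h)))
  have h1 : ∑ i, w (r i) * bidAt bs (r i) = ∑ k : Fin n, w (k : ℕ) * bidAt bs (k : ℕ) :=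
    (Equiv.sum_comp er (fun k : Fin n => w (k : ℕ) * bidAt bs (k : ℕ)))
  rw [h1]
  have h2 : ∀ k : Fin n, w k * bidAt bs k
      = ∑ j, (if 0 < bs j ∧ rank bs j = (k : ℕ) then w (rank bs j) * bs j else 0) := by
    intro k
    rw [bidAt, Finset.mul_sum, Finset.sum_filter]
    apply Finset.sum_congr rfl
    intro j _
    by_cases hj : 0 < bs j ∧ rank bs j = (k : ℕ)
    · rw [if_pos hj, if_pos hj, hj.2]
    · rw [if_neg hj, if_neg hj]
  simp_rw [h2]
  rw [Finset.sum_comm]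
  apply Finset.sum_congr rfl
  intro j _
  unfold slotW
  by_cases hj : 0 < bs j
  · rw [if_pos hj]
    have hrankj : rank bs j < n := by
      rw [rank_eq_br]
      calc br bs (univ.filter fun l => 0 < bs l) j
          < (univ.filter fun l => 0 < bs l).card := br_lt_card (by simp [hj])
        _ ≤ n := by simpa using Finset.card_filter_le univ (fun l => 0 < bs l)
    calc ∑ k : Fin n, (if 0 < bs j ∧ rank bs j = (k : ℕ) then w (rank bs j) * bs j else 0)
        = ∑ k : Fin n, (if k = (⟨rank bs j, hrankj⟩ : Fin n) then w (rank bs j) * bs j else 0) := by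
          apply Finset.sum_congr rfl
          intro k _
          have hiff : (0 < bs j ∧ rank bs j = (k : ℕ)) ↔ k = (⟨rank bs j, hrankj⟩ : Fin n) := by
            constructor
            · rintro ⟨-, h⟩
              exact Fin.ext h.symm
            · rintro rfl
              exact ⟨hj, rfl⟩
          rw [if_congr hiff rfl rfl]
      _ = w (rank bs j) * bs j := by rw [Finset.sum_ite_eq' univ]; simp
  · rw [if_neg hj, zero_mul]
    apply Finset.sum_eq_zero
    intro k _
    exact if_neg (fun h => hj h.1)

end PBMAux
namespace PBMAux
open Finset

/-- greedy selection: some subset of size `≤ κ` captures a `β` fraction of the sum. -/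
lemma exists_subset_beta {α : Type*} [DecidableEq α] (A : Finset α) (x : α → ℝ)
    (hx : ∀ s ∈ A, 0 ≤ x s) (κ : ℕ) (β : ℝ) (hβ0 : 0 ≤ β) (hβ1 : β ≤ 1)
    (hβA : β * A.card ≤ κ) :
    ∃ D ⊆ A, D.card ≤ κ ∧ β * ∑ s ∈ A, x s ≤ ∑ s ∈ D, x s := by
  classical
  have hA0 : 0 ≤ ∑ s ∈ A, x s := Finset.sum_nonneg hx
  by_cases hle : A.card ≤ κ
  · exact ⟨A, Finset.Subset.refl A, hle, by nlinarith⟩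
  push_neg at hle
  -- choose a subset of size κ with maximal sum
  have hne : (A.powersetCard κ).Nonempty :=
    Finset.powersetCard_nonempty.2 hle.le
  obtain ⟨D, hD, hmax⟩ := Finset.exists_max_image (A.powersetCard κ) (fun D => ∑ s ∈ D, x s) hne
  rw [Finset.mem_powersetCard] at hD
  obtain ⟨hDA, hDcard⟩ := hD
  refine ⟨D, hDA, hDcard.le, ?_⟩
  -- every dropped element is at most every kept element
  have hswap : ∀ t ∈ A \ D, ∀ s ∈ D, x t ≤ x s := by
    intro t ht s hs
    rw [Finset.mem_sdiff] at ht
    have hD' : insert t (D.erase s) ∈ A.powersetCard κ := by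
      rw [Finset.mem_powersetCard]
      constructor
      · intro a ha
        rcases Finset.mem_insert.1 ha with rfl | ha
        · exact ht.1
        · exact hDA (Finset.erase_subset _ _ ha)
      · rw [Finset.card_insert_of_notMem (fun h => ht.2 (Finset.erase_subset _ _ h)),
          Finset.card_erase_of_mem hs, hDcard]
        have hκpos : 0 < κ := hDcard ▸ Finset.card_pos.2 ⟨s, hs⟩
        omega
    have := hmax _ hD'
    rw [Finset.sum_insert (fun h => ht.2 (Finset.erase_subset _ _ h)),
      Finset.sum_erase_eq_sub hs] at this
    linarith
  -- each dropped element is at most the average of D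
  have hdrop : ∀ t ∈ A \ D, (κ : ℝ) * x t ≤ ∑ s ∈ D, x s := by
    intro t ht
    calc (κ : ℝ) * x t = ∑ _s ∈ D, x t := by rw [Finset.sum_const, hDcard, nsmul_eq_mul]
      _ ≤ ∑ s ∈ D, x s := Finset.sum_le_sum fun s hs => hswap t ht s hs
  have hsplit : ∑ s ∈ A, x s = ∑ s ∈ D, x s + ∑ s ∈ A \ D, x s := by
    rw [add_comm, Finset.sum_sdiff hDA]
  have hkey : (κ : ℝ) * ∑ s ∈ A \ D, x s ≤ ((A.card : ℝ) - κ) * ∑ s ∈ D, x s := by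
    calc (κ : ℝ) * ∑ s ∈ A \ D, x s = ∑ t ∈ A \ D, (κ : ℝ) * x t := by rw [Finset.mul_sum]
      _ ≤ ∑ _t ∈ A \ D, ∑ s ∈ D, x s := Finset.sum_le_sum fun t ht => hdrop t ht
      _ = ((A \ D).card : ℝ) * ∑ s ∈ D, x s := by rw [Finset.sum_const, nsmul_eq_mul]
      _ = ((A.card : ℝ) - κ) * ∑ s ∈ D, x s := by
          rw [Finset.card_sdiff_of_subset hDA, hDcard]
          have : (κ : ℝ) ≤ (A.card : ℝ) := by exact_mod_cast hle.le
          rw [Nat.cast_sub hle.le]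
  have hD0 : 0 ≤ ∑ s ∈ D, x s := Finset.sum_nonneg fun s hs => hx s (hDA hs)
  -- κ * Σ_A ≤ |A| * Σ_D
  have hmain : (κ : ℝ) * ∑ s ∈ A, x s ≤ (A.card : ℝ) * ∑ s ∈ D, x s := by
    rw [hsplit]
    nlinarith
  have hAcard : (0 : ℝ) < (A.card : ℝ) := by
    have : 0 < A.card := Nat.lt_of_le_of_lt (Nat.zero_le κ) hle
    exact_mod_cast this
  have h1 : β * (A.card : ℝ) * ∑ s ∈ A, x s ≤ (κ : ℝ) * ∑ s ∈ A, x s :=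
    mul_le_mul_of_nonneg_right hβA hA0
  nlinarith
end PBMAux
namespace PBMAux
open PBM Finset

lemma le_of_forall_pos_le_add' {a b : ℝ} (h : ∀ δ : ℝ, 0 < δ → a ≤ b + δ) : a ≤ b := by
  by_contra hc
  push_neg at hc
  have := h ((a - b) / 2) (by linarith)
  linarith

lemma pos_of_mul3 {a b c : ℝ} (ha : 0 ≤ a) (hb : 0 ≤ b) (h : 0 < a * (b * c)) :
    0 < a ∧ 0 < b ∧ 0 < c := by
  rcases ha.eq_or_lt with rfl | ha'
  · rw [zero_mul] at h; exact absurd h (lt_irrefl 0)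
  rcases hb.eq_or_lt with rfl | hb'
  · rw [zero_mul, mul_zero] at h; exact absurd h (lt_irrefl 0)
  refine ⟨ha', hb', ?_⟩
  by_contra hc
  push_neg at hc
  have h1 : b * c ≤ 0 := mul_nonpos_of_nonneg_of_nonpos hb hc
  have h2 : a * (b * c) ≤ 0 := mul_nonpos_of_nonneg_of_nonpos ha h1
  linarith

variable {Q S : Type*} [Fintype Q] [Fintype S] {n : ℕ}

lemma mass_nonneg (P : Q → ℝ) (pi : Q → S → ℝ) (hP0 : ∀ q, 0 ≤ P q)
    (hpi0 : ∀ q s, 0 ≤ pi q s) (s : S) : 0 ≤ mass P pi s :=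
  Finset.sum_nonneg fun q _ => mul_nonneg (hpi0 q s) (hP0 q)

lemma kwVal_nonneg (P : Q → ℝ) (pi : Q → S → ℝ) (vq : Q → ℝ) (hP0 : ∀ q, 0 ≤ P q)
    (hpi0 : ∀ q s, 0 ≤ pi q s) (hv : ∀ q, 0 ≤ vq q) (s : S) : 0 ≤ kwVal P pi vq s := by
  apply div_nonneg
  · exact Finset.sum_nonneg fun q _ => mul_nonneg (mul_nonneg (hpi0 q s) (hv q)) (hP0 q)
  · exact Finset.sum_nonneg fun q _ => mul_nonneg (hpi0 q s) (hP0 q)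

lemma mass_mul_kwVal (P : Q → ℝ) (pi : Q → S → ℝ) (vq : Q → ℝ) (hP0 : ∀ q, 0 ≤ P q)
    (hpi0 : ∀ q s, 0 ≤ pi q s) (s : S) :
    mass P pi s * kwVal P pi vq s = ∑ q, pi q s * vq q * P q := by
  by_cases hM : (∑ q, pi q s * P q) = 0
  · have hzero : ∀ q ∈ (univ : Finset Q), pi q s * P q = 0 :=
      (Finset.sum_eq_zero_iff_of_nonneg
        (fun q _ => mul_nonneg (hpi0 q s) (hP0 q))).1 hM
    have h1 : mass P pi s = 0 := hM
    rw [h1, zero_mul]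
    symm
    apply Finset.sum_eq_zero
    intro q hq
    calc pi q s * vq q * P q = vq q * (pi q s * P q) := by ring
      _ = 0 := by rw [hzero q hq, mul_zero]
  · rw [kwVal, mass, mul_div_cancel₀ _ hM]

lemma kwVal_zero_of_irrelevant (P : Q → ℝ) (pi : Q → S → ℝ) (vq : Q → ℝ)
    (hP0 : ∀ q, 0 ≤ P q) (hpi0 : ∀ q s, 0 ≤ pi q s) (hv : ∀ q, 0 ≤ vq q) (s : S)
    (h : ¬ ∃ q, 0 < pi q s ∧ 0 < vq q) : kwVal P pi vq s = 0 := by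
  push_neg at h
  rw [kwVal]
  have : (∑ q, pi q s * vq q * P q) = 0 := by
    apply Finset.sum_eq_zero
    intro q _
    by_cases hpi : 0 < pi q s
    · have : vq q = 0 := le_antisymm (h q hpi) (hv q)
      rw [this, mul_zero, zero_mul]
    · have : pi q s = 0 := le_antisymm (not_lt.1 hpi) (hpi0 q s)
      rw [this, zero_mul, zero_mul]
  rw [this, zero_div]

/-- utility rewritten keyword-by-keyword. -/
lemma util_eq (P : Q → ℝ) (pi : Q → S → ℝ) (w : ℕ → ℝ) (v : Fin n → Q → ℝ)
    (hP0 : ∀ q, 0 ≤ P q) (hpi0 : ∀ q s, 0 ≤ pi q s)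
    (bb : Fin n → S → ℝ) (i : Fin n) :
    util P pi w v bb i = ∑ s, slotW w (fun j => bb j s) i *
      (mass P pi s * kwVal P pi (v i) s - mass P pi s * pay (fun j => bb j s) i) := by
  rw [util]
  simp_rw [Finset.mul_sum]
  rw [Finset.sum_comm]
  apply Finset.sum_congr rfl
  intro s _
  set A := slotW w (fun j => bb j s) i
  set B := pay (fun j => bb j s) i
  calc ∑ q, P q * (pi q s * (A * (v i q - B)))
      = ∑ q, (A * (pi q s * v i q * P q) - (A * B) * (pi q s * P q)) := by
        apply Finset.sum_congr rfl
        intro q _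
        ring
    _ = A * (∑ q, pi q s * v i q * P q) - (A * B) * (∑ q, pi q s * P q) := by
        rw [Finset.sum_sub_distrib, Finset.mul_sum, Finset.mul_sum]
    _ = A * (mass P pi s * kwVal P pi (v i) s) - (A * B) * mass P pi s := by
        rw [mass_mul_kwVal P pi (v i) hP0 hpi0 s, mass]
    _ = A * (mass P pi s * kwVal P pi (v i) s - mass P pi s * B) := by ring

/-- social welfare rewritten keyword-by-keyword. -/
lemma SW_eq (P : Q → ℝ) (pi : Q → S → ℝ) (w : ℕ → ℝ) (v : Fin n → Q → ℝ)
    (hP0 : ∀ q, 0 ≤ P q) (hpi0 : ∀ q s, 0 ≤ pi q s)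
    (bb : Fin n → S → ℝ) :
    SW P pi w v bb = ∑ s, ∑ i, slotW w (fun j => bb j s) i *
      (mass P pi s * kwVal P pi (v i) s) := by
  rw [SW]
  simp_rw [Finset.mul_sum]
  rw [Finset.sum_comm]
  apply Finset.sum_congr rfl
  intro s _
  rw [Finset.sum_comm]
  apply Finset.sum_congr rfl
  intro i _
  set A := slotW w (fun j => bb j s) i
  calc ∑ q, P q * (pi q s * (A * v i q))
      = ∑ q, A * (pi q s * v i q * P q) := by
        apply Finset.sum_congr rfl
        intro q _
        ring
    _ = A * (∑ q, pi q s * v i q * P q) := by rw [Finset.mul_sum]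
    _ = A * (mass P pi s * kwVal P pi (v i) s) := by
        rw [mass_mul_kwVal P pi (v i) hP0 hpi0 s]

lemma slotW_nonneg (w : ℕ → ℝ) (hw0 : ∀ k, 0 ≤ w k) (bs : Fin n → ℝ) (i : Fin n) :
    0 ≤ slotW w bs i := by
  rw [slotW]
  split
  · exact hw0 _
  · exact le_refl 0

/-- homogeneity transfers to keyword values. -/
lemma hom_bound (P : Q → ℝ) (pi : Q → S → ℝ) (v : Fin n → Q → ℝ) (c : ℝ)
    (hP0 : ∀ q, 0 ≤ P q) (hpi0 : ∀ q s, 0 ≤ pi q s)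
    (hhom : ∀ (i : Fin n) (s : S) (q₁ q₂ : Q), 0 < pi q₁ s → 0 < pi q₂ s →
      v i q₁ ≤ c * v i q₂)
    (i : Fin n) (s : S) (q : Q) (hq : 0 < pi q s) :
    mass P pi s * v i q ≤ c * (mass P pi s * kwVal P pi (v i) s) := by
  rw [mass_mul_kwVal P pi (v i) hP0 hpi0 s, mass, Finset.sum_mul, Finset.mul_sum]
  apply Finset.sum_le_sum
  intro q' _
  by_cases hq' : 0 < pi q' s
  · have h1 : v i q ≤ c * v i q' := hhom i s q q' hq hq'
    have h2 : 0 ≤ pi q' s * P q' := mul_nonneg (hpi0 q' s) (hP0 q')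
    calc pi q' s * P q' * v i q ≤ pi q' s * P q' * (c * v i q') :=
          mul_le_mul_of_nonneg_left h1 h2
      _ = c * (pi q' s * v i q' * P q') := by ring
  · have : pi q' s = 0 := le_antisymm (not_lt.1 hq') (hpi0 q' s)
    rw [this]
    ring_nf
    simp

end PBMAux


open PBM in
/-- full-information multi-slot pure PoA of PBM-GSP: if the
auction system is `β`-KL-expressive and `c`-homogeneous then for every
conservative pure Nash equilibrium `b`, `SW(OPT(v)) ≤ ((β+1)/β)·c·SW(b)`. -/
theorem stmt8
    {Q S : Type*} [Fintype Q] [Fintype S] {n : ℕ}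
    (P : Q → ℝ) (pi : Q → S → ℝ) (w : ℕ → ℝ) (κ : ℕ)
    (hP0 : ∀ q, 0 ≤ P q) (hP1 : ∑ q, P q = 1)
    (hpi0 : ∀ q s, 0 ≤ pi q s) (hpi1 : ∀ q, ∑ s, pi q s = 1)
    (hS : ∀ s : S, ∃ q, 0 < pi q s)
    (hw : Antitone w) (hw0 : ∀ k, 0 ≤ w k) (hκ : 0 < κ)
    (β c : ℝ) (hβ : 0 < β) (hβ1 : β ≤ 1) (hc : 0 < c)
    (v : Fin n → Q → ℝ) (hv0 : ∀ i q, 0 ≤ v i q)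
    (hKL : KLExpressive pi v κ β)
    (hhom : ∀ (i : Fin n) (s : S) (q₁ q₂ : Q), 0 < pi q₁ s → 0 < pi q₂ s →
      v i q₁ ≤ c * v i q₂)
    (b : Fin n → S → ℝ)
    (hvalid : ∀ i, ValidBid κ (b i))
    (hcons : Conservative P pi v b)
    (hNE : ∀ (i : Fin n) (b' : S → ℝ), ValidBid κ b' →
      util P pi w v (Function.update b i b') i ≤ util P pi w v b i) :
    SWopt P w v ≤ ((β + 1) / β) * c * SW P pi w v b := by
  classical
  set V : Fin n → S → ℝ := fun i s => kwVal P pi (v i) s with hVdef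
  set M : S → ℝ := fun s => mass P pi s with hMdef
  have hM0 : ∀ s, 0 ≤ M s := fun s => PBMAux.mass_nonneg P pi hP0 hpi0 s
  have hV0 : ∀ i s, 0 ≤ V i s := fun i s =>
    PBMAux.kwVal_nonneg P pi (v i) hP0 hpi0 (hv0 i) s
  set ρ : S → Fin n → ℕ := fun s i => rankAll (fun j => V j s) i with hρdef
  set γ : Fin n → S → ℝ := fun i s => PBMAux.bidAt (fun j => b j s) (ρ s i) with hγdef
  have hb0 : ∀ j s, 0 ≤ b j s := fun j s => (hvalid j).1 s
  have hγ0 : ∀ i s, 0 ≤ γ i s := fun i s => PBMAux.bidAt_nonneg (fun j => hb0 j s) _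
  set W : ℝ := ∑ s, ∑ i, w (ρ s i) * (M s * V i s) with hWdef
  set Γ : ℝ := ∑ s, ∑ i, w (ρ s i) * (M s * γ i s) with hΓdef
  have hA : SWopt P w v ≤ c * W := by
    have hkey : ∀ (q : Q) (s : S), pi q s * P q * (∑ i, w (rankAll (fun j => v j q) i) * v i q)
        ≤ pi q s * P q * (c * ∑ i, w (ρ s i) * V i s) := by
      intro q s
      by_cases hpos : 0 < pi q s ∧ 0 < P q
      · have hMpos : 0 < M s := by
          have hle : pi q s * P q ≤ M s := Finset.single_le_sum
            (f := fun q' => pi q' s * P q')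
            (fun q' _ => mul_nonneg (hpi0 q' s) (hP0 q')) (mem_univ q)
          nlinarith [mul_pos hpos.1 hpos.2]
        have hvV : ∀ i, v i q ≤ c * V i s := by
          intro i
          have h1 := PBMAux.hom_bound P pi v c hP0 hpi0 hhom i s q hpos.1
          have h2 : M s * v i q ≤ M s * (c * V i s) := h1.trans (le_of_eq (by ring))
          exact (mul_le_mul_iff_right₀ hMpos).1 h2
        have hT : ∑ i, w (rankAll (fun j => v j q) i) * v i q
            ≤ c * ∑ i, w (ρ s i) * V i s := by
          calc ∑ i, w (rankAll (fun j => v j q) i) * v i q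
              ≤ ∑ i, w (rankAll (fun j => v j q) i) * (c * V i s) :=
                Finset.sum_le_sum fun i _ => mul_le_mul_of_nonneg_left (hvV i) (hw0 _)
            _ = c * ∑ i, w (rankAll (fun j => v j q) i) * V i s := by
                rw [Finset.mul_sum]
                apply Finset.sum_congr rfl
                intro i _
                ring
            _ ≤ c * ∑ i, w (rankAll (fun j => V j s) i) * V i s := by
                apply mul_le_mul_of_nonneg_left _ hc.le
                exact PBMAux.rearrange w hw (fun j => v j q) (fun j => V j s)
                  (fun j => hV0 j s)
        exact mul_le_mul_of_nonneg_left hT (mul_nonneg (hpi0 q s) (hP0 q))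
      · have h0 : pi q s * P q = 0 := by
          rcases not_and_or.1 hpos with h | h
          · rw [le_antisymm (not_lt.1 h) (hpi0 q s), zero_mul]
          · rw [le_antisymm (not_lt.1 h) (hP0 q), mul_zero]
        rw [h0, zero_mul, zero_mul]
    calc SWopt P w v
        = ∑ q, ∑ s, pi q s * P q * (∑ i, w (rankAll (fun j => v j q) i) * v i q) := by
          rw [SWopt]
          apply Finset.sum_congr rfl
          intro q _
          symm
          simp_rw [mul_assoc]
          rw [← Finset.sum_mul, hpi1 q, one_mul]
      _ ≤ ∑ q, ∑ s, pi q s * P q * (c * ∑ i, w (ρ s i) * V i s) :=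
          Finset.sum_le_sum fun q _ => Finset.sum_le_sum fun s _ => hkey q s
      _ = c * W := by
          rw [Finset.sum_comm, hWdef, Finset.mul_sum]
          apply Finset.sum_congr rfl
          intro s _
          rw [← Finset.sum_mul]
          have hMs : (∑ q, pi q s * P q) = M s := rfl
          rw [hMs]
          simp only [Finset.mul_sum]
          apply Finset.sum_congr rfl
          intro i _
          ring
  have hB : ∀ i, β * (∑ s, (w (ρ s i) * (M s * V i s) - w (ρ s i) * (M s * γ i s)))
      ≤ util P pi w v b i := by
    intro i
    set g : S → ℝ := fun s => w (ρ s i) * (M s * V i s) - w (ρ s i) * (M s * γ i s)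
      with hgdef
    have hutil0 : 0 ≤ util P pi w v b i := by
      have hvz : ValidBid κ (fun _ : S => (0 : ℝ)) := ⟨fun _ => le_refl 0, by simp⟩
      have h0 := hNE i (fun _ => 0) hvz
      refine le_trans (le_of_eq ?_) h0
      symm
      rw [PBMAux.util_eq P pi w v hP0 hpi0 _ i]
      apply Finset.sum_eq_zero
      intro s _
      have hz : slotW w (fun j => Function.update b i (fun _ => (0 : ℝ)) j s) i = 0 := by
        rw [slotW, if_neg]
        simp
      rw [hz, zero_mul]
    set A : Finset S := univ.filter (fun s => 0 < g s) with hAdef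
    have hApos : ∀ s ∈ A, 0 < g s := fun s hs => (mem_filter.1 hs).2
    have hAfac : ∀ s ∈ A, 0 < w (ρ s i) ∧ 0 < M s ∧ 0 < V i s - γ i s := by
      intro s hs
      have hgs := hApos s hs
      have hprod : 0 < w (ρ s i) * (M s * (V i s - γ i s)) := by
        have heq : g s = w (ρ s i) * (M s * (V i s - γ i s)) := by
          rw [hgdef]
          ring
        rw [← heq]
        exact hgs
      exact PBMAux.pos_of_mul3 (hw0 _) (hM0 s) hprod
    have hAsub : A ⊆ univ.filter (fun s : S => ∃ q, 0 < pi q s ∧ 0 < v i q) := by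
      intro s hs
      rw [mem_filter]
      refine ⟨mem_univ s, ?_⟩
      by_contra hno
      have hVz : V i s = 0 :=
        PBMAux.kwVal_zero_of_irrelevant P pi (v i) hP0 hpi0 (hv0 i) s hno
      have h3 := (hAfac s hs).2.2
      rw [hVz] at h3
      linarith [hγ0 i s]
    have hcard : β * ((A.card : ℕ) : ℝ) ≤ (κ : ℝ) := by
      have h1 : (A.card : ℝ)
          ≤ ((univ.filter (fun s : S => ∃ q, 0 < pi q s ∧ 0 < v i q)).card : ℝ) := by
        exact_mod_cast Finset.card_le_card hAsub
      have h2 := hKL i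
      nlinarith
    obtain ⟨D, hDA, hDκ, hDsum⟩ := PBMAux.exists_subset_beta A g
      (fun s hs => (hApos s hs).le) κ β hβ.le hβ1 hcard
    have hstep : ∑ s ∈ D, g s ≤ util P pi w v b i := by
      apply PBMAux.le_of_forall_pos_le_add'
      intro δ hδ
      rcases Finset.eq_empty_or_nonempty D with rfl | hDne
      · rw [Finset.sum_empty]
        linarith
      set ε₀ : ℝ := D.inf' hDne (fun s => V i s - γ i s) with hε₀def
      have hε₀ : 0 < ε₀ := by
        rw [hε₀def, Finset.lt_inf'_iff]
        intro s hs
        exact (hAfac s (hDA hs)).2.2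
      set Cs : ℝ := ∑ s ∈ D, w (ρ s i) * M s with hCsdef
      have hCs0 : 0 ≤ Cs := Finset.sum_nonneg fun s _ => mul_nonneg (hw0 _) (hM0 _)
      set ε : ℝ := min ε₀ (δ / (Cs + 1)) with hεdef
      have hεpos : 0 < ε := lt_min hε₀ (div_pos hδ (by linarith))
      set b' : S → ℝ := fun s => if s ∈ D then γ i s + ε else 0 with hb'def
      have hb'valid : ValidBid κ b' := by
        constructor
        · intro s
          rw [hb'def]
          dsimp only
          split
          · linarith [hγ0 i s]
          · exact le_refl 0
        · refine le_trans (Finset.card_le_card ?_) hDκ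
          intro s hs
          rw [mem_filter] at hs
          by_contra hsD
          rw [hb'def] at hs
          simp only [if_neg hsD] at hs
          exact lt_irrefl 0 hs.2
      have hnei := hNE i b' hb'valid
      have hlow : ∑ s ∈ D, (g s - ε * (w (ρ s i) * M s))
          ≤ util P pi w v (Function.update b i b') i := by
        rw [PBMAux.util_eq P pi w v hP0 hpi0 _ i]
        have hsplit : ∑ s ∈ D, (g s - ε * (w (ρ s i) * M s))
            = ∑ s, (if s ∈ D then g s - ε * (w (ρ s i) * M s) else 0) := by
          rw [Finset.sum_ite_mem, Finset.univ_inter]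
        rw [hsplit]
        apply Finset.sum_le_sum
        intro s _
        by_cases hsD : s ∈ D
        · rw [if_pos hsD]
          set bs : Fin n → ℝ := fun j => Function.update b i b' j s with hbsdef
          have hbsi : bs i = γ i s + ε := by
            rw [hbsdef]
            simp [hb'def, hsD]
          have hbsj : ∀ j, j ≠ i → bs j = b j s := by
            intro j hj
            rw [hbsdef]
            simp [Function.update_of_ne hj]
          have hbspos : 0 < bs i := by
            rw [hbsi]
            linarith [hγ0 i s]
          have hbs0 : ∀ j, 0 ≤ bs j := by
            intro j
            by_cases hj : j = i
            · rw [hj, hbsi]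
              linarith [hγ0 i s]
            · rw [hbsj j hj]
              exact hb0 j s
          have hslot : slotW w bs i = w (rank bs i) := by
            rw [slotW, if_pos hbspos]
          have hγrfl : PBMAux.bidAt (fun l => b l s) (ρ s i) = γ i s := rfl
          have hrank : rank bs i ≤ ρ s i := by
            have hsub2 : (univ.filter fun j => 0 < bs j ∧ (bs i < bs j ∨ (bs j = bs i ∧ j < i)))
                ⊆ (univ.filter fun j => 0 < b j s ∧
                    PBMAux.bidAt (fun l => b l s) (ρ s i) < b j s) := by
              intro j hj
              rw [mem_filter] at hj ⊢
              refine ⟨mem_univ j, ?_⟩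
              have hjne : j ≠ i := by
                rintro rfl
                rcases hj.2.2 with h | ⟨h, hlt⟩
                · exact lt_irrefl _ h
                · exact lt_irrefl _ hlt
              rw [hbsj j hjne] at hj
              have hge : γ i s + ε ≤ b j s := by
                rcases hj.2.2 with h | ⟨h, _⟩
                · rw [hbsi] at h
                  linarith
                · rw [hbsi] at h
                  linarith [h.le]
              rw [hγrfl]
              refine ⟨hj.2.1, ?_⟩
              linarith [hγ0 i s]
            calc rank bs i
                ≤ (univ.filter fun j => 0 < b j s ∧
                    PBMAux.bidAt (fun l => b l s) (ρ s i) < b j s).card :=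
                  Finset.card_le_card hsub2
              _ ≤ ρ s i := PBMAux.card_gt_bidAt_le (ρ s i)
          have hpayle : pay bs i ≤ γ i s + ε := by
            have hp := PBMAux.pay_le_self hbs0 hbspos
            rwa [hbsi] at hp
          have hεle : ε ≤ V i s - γ i s :=
            le_trans (min_le_left _ _) (Finset.inf'_le _ hsD)
          have hVpay : 0 ≤ V i s - pay bs i := by linarith
          have hwle : w (ρ s i) ≤ w (rank bs i) := hw hrank
          rw [hslot, hgdef]
          dsimp only
          have h1 : w (ρ s i) * (M s * (V i s - pay bs i))
              ≤ w (rank bs i) * (M s * (V i s - pay bs i)) :=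
            mul_le_mul_of_nonneg_right hwle (mul_nonneg (hM0 s) hVpay)
          have h2 : w (ρ s i) * (M s * (V i s - (γ i s + ε)))
              ≤ w (ρ s i) * (M s * (V i s - pay bs i)) := by
            apply mul_le_mul_of_nonneg_left _ (hw0 _)
            apply mul_le_mul_of_nonneg_left _ (hM0 s)
            linarith
          calc w (ρ s i) * (M s * V i s) - w (ρ s i) * (M s * γ i s)
                - ε * (w (ρ s i) * M s)
              = w (ρ s i) * (M s * (V i s - (γ i s + ε))) := by ring
            _ ≤ w (rank bs i) * (M s * (V i s - pay bs i)) := le_trans h2 h1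
            _ = w (rank bs i) * (M s * V i s - M s * pay bs i) := by ring
        · rw [if_neg hsD]
          have hz : slotW w (fun j => Function.update b i b' j s) i = 0 := by
            rw [slotW, if_neg]
            simp [hb'def, hsD]
          rw [hz, zero_mul]
      have hεC : ε * Cs ≤ δ := by
        have h1 : ε ≤ δ / (Cs + 1) := min_le_right _ _
        have h2 : ε * Cs ≤ (δ / (Cs + 1)) * Cs := mul_le_mul_of_nonneg_right h1 hCs0
        have h3 : (δ / (Cs + 1)) * Cs ≤ δ := by
          rw [div_mul_eq_mul_div, div_le_iff₀ (by linarith : (0:ℝ) < Cs + 1)]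
          nlinarith
        linarith
      have hsum2 : ∑ s ∈ D, (g s - ε * (w (ρ s i) * M s)) = ∑ s ∈ D, g s - ε * Cs := by
        rw [Finset.sum_sub_distrib, hCsdef, Finset.mul_sum]
      have := hlow.trans hnei
      rw [hsum2] at this
      linarith
    have hgle : ∑ s, g s ≤ ∑ s ∈ A, g s := by
      rw [hAdef]
      rw [← Finset.sum_filter_add_sum_filter_not univ (fun s => 0 < g s) g]
      have hle0 : ∑ s ∈ univ.filter (fun s => ¬ 0 < g s), g s ≤ 0 :=
        Finset.sum_nonpos fun s hs => not_lt.1 (mem_filter.1 hs).2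
      linarith
    calc β * ∑ s, g s ≤ β * ∑ s ∈ A, g s := mul_le_mul_of_nonneg_left hgle hβ.le
      _ ≤ ∑ s ∈ D, g s := hDsum
      _ ≤ util P pi w v b i := hstep
  have hC : ∑ i, util P pi w v b i ≤ SW P pi w v b := by
    rw [PBMAux.SW_eq P pi w v hP0 hpi0 b]
    calc ∑ i, util P pi w v b i
        = ∑ i, ∑ s, slotW w (fun j => b j s) i *
            (M s * V i s - M s * pay (fun j => b j s) i) :=
          Finset.sum_congr rfl fun i _ => PBMAux.util_eq P pi w v hP0 hpi0 b i
      _ ≤ ∑ i, ∑ s, slotW w (fun j => b j s) i * (M s * V i s) := by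
          apply Finset.sum_le_sum
          intro i _
          apply Finset.sum_le_sum
          intro s _
          have h1 := PBMAux.slotW_nonneg w hw0 (fun j => b j s) i
          have h2 : 0 ≤ M s * pay (fun j => b j s) i :=
            mul_nonneg (hM0 s) (PBMAux.pay_nonneg (fun j => hb0 j s) i)
          nlinarith
      _ = ∑ s, ∑ i, slotW w (fun j => b j s) i * (M s * V i s) := Finset.sum_comm
  have hD : Γ ≤ SW P pi w v b := by
    rw [PBMAux.SW_eq P pi w v hP0 hpi0 b, hΓdef]
    apply Finset.sum_le_sum
    intro s _
    have hsum : ∑ i, w (ρ s i) * PBMAux.bidAt (fun j => b j s) (ρ s i)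
        = ∑ j, slotW w (fun l => b l s) j * b j s :=
      PBMAux.sum_bidAt w (fun l => b l s) (ρ s)
        (fun i => PBMAux.rankAll_lt _ i) (PBMAux.rankAll_injective _)
    calc ∑ i, w (ρ s i) * (M s * γ i s) = M s * ∑ i, w (ρ s i) * γ i s := by
          rw [Finset.mul_sum]
          apply Finset.sum_congr rfl
          intro i _
          ring
      _ = M s * ∑ j, slotW w (fun l => b l s) j * b j s := by rw [← hsum]
      _ ≤ M s * ∑ j, slotW w (fun l => b l s) j * V j s := by
          apply mul_le_mul_of_nonneg_left _ (hM0 s)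
          apply Finset.sum_le_sum
          intro j _
          exact mul_le_mul_of_nonneg_left (hcons j s) (PBMAux.slotW_nonneg w hw0 _ j)
      _ = ∑ j, slotW w (fun l => b l s) j * (M s * V j s) := by
          rw [Finset.mul_sum]
          apply Finset.sum_congr rfl
          intro j _
          ring
  have hBsum : β * (W - Γ) ≤ SW P pi w v b := by
    have h2 : ∑ i, β * (∑ s, (w (ρ s i) * (M s * V i s) - w (ρ s i) * (M s * γ i s)))
        ≤ ∑ i, util P pi w v b i := Finset.sum_le_sum fun i _ => hB i
    have h3 : ∑ i, (∑ s, (w (ρ s i) * (M s * V i s) - w (ρ s i) * (M s * γ i s)))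
        = W - Γ := by
      rw [hWdef, hΓdef]
      simp_rw [Finset.sum_sub_distrib]
      rw [Finset.sum_comm (f := fun i s => w (ρ s i) * (M s * V i s)),
        Finset.sum_comm (f := fun i s => w (ρ s i) * (M s * γ i s))]
    rw [← Finset.mul_sum, h3] at h2
    linarith [hC]
  have hWle : W ≤ ((β + 1) / β) * SW P pi w v b := by
    rw [div_mul_eq_mul_div, le_div_iff₀ hβ]
    nlinarith [hBsum, hD]
  calc SWopt P w v ≤ c * W := hA
    _ ≤ c * (((β + 1) / β) * SW P pi w v b) :=
        mul_le_mul_of_nonneg_left hWle hc.le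
    _ = ((β + 1) / β) * c * SW P pi w v b := by ring
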